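/- Let r, u0 be real numbers with r ≠ 1. Define sequences u0n, u1n : ℕ → ℝ by u0n(0) = u0, u0n(n+1) = u0 + r·u0n(n), and u1n(0) = 0, u1n(n+1) = r·u1n(n) + r·u0n(n)². Then for every n ≥ 0, u1n(n) = u0²·[ (−2r^(n+2) + 2r^(n+1))·n + (−r + r^(2n+2) + r^(n+1) − r^(n+2)) ] / (r−1)³. -/

import Mathlib

theorem stmt_0 (r u0 : ℝ) (hr : r ≠ 1)
    (u0n u1n : ℕ → ℝ)
    (h00 : u0n 0 = u0)
    (h0s : ∀ n : ℕ, u0n (n + 1) = u0 + r * u0n n)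
    (h10 : u1n 0 = 0)
    (h1s : ∀ n : ℕ, u1n (n + 1) = r * u1n n + r * (u0n n) ^ 2) :
    ∀ n : ℕ, u1n n =
      u0 ^ 2 *
        ((-2 * r ^ (n + 2) + 2 * r ^ (n + 1)) * (n : ℝ) +
          (-r + r ^ (2 * n + 2) + r ^ (n + 1) - r ^ (n + 2))) / (r - 1) ^ 3 := by
  have hr' : r - 1 ≠ 0 := sub_ne_zero.mpr hr
  have h0 : ∀ n : ℕ, u0n n = u0 * (r ^ (n + 1) - 1) / (r - 1) := by
    intro n
    induction n with
    | zero => rw [h00]; field_simp; ring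
    | succ k ih =>
      rw [h0s, ih]
      field_simp
      ring
  intro n
  induction n with
  | zero => rw [h10]; field_simp; push_cast; ring
  | succ k ih =>
    rw [h1s, ih, h0 k]
    field_simp
    push_cast
    ring
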